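/- Let M be a matroid on ground set E with two weight functions w₁, w₂ : E → R, and for λ ∈ [0,1] let w^{(λ)} = (1−λ)w₁ + λw₂. Suppose λ₀ ∈ (0,1) is such that for all i, j ∈ E with (w₁(i), w₂(i)) ≠ (w₁(j), w₂(j)) we have w^{(λ₀)}(i) ≠ w^{(λ₀)}(j). Then any two bases x, y of M minimizing w^{(λ₀)} satisfy w₁(x) = w₁(y) and w₂(x) = w₂(y). -/

import Mathlib

open Set Finset
open scoped Classical

section aux

variable {α : Type*} [Fintype α]

private lemma finsum_eq_toFinset_sum (s : Set α) (f : α → ℝ) :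
    (∑ᶠ e ∈ s, f e) = ∑ e ∈ s.toFinset, f e := by
  rw [← Set.coe_toFinset s, finsum_mem_coe_finset, Set.coe_toFinset]

open scoped Classical in
/-- Key counting lemma: if `y` is a minimum-weight base and `P` is a "downward closed"
predicate w.r.t. `w`, then any base `x` has at most as many `P`-elements as `y`. -/
private lemma count_le (M : Matroid α) (w : α → ℝ) {x y : Set α}
    (hx : M.IsBase x) (hy : M.IsBase y)
    (hymin : ∀ b : Set α, M.IsBase b → (∑ e ∈ y.toFinset, w e) ≤ ∑ e ∈ b.toFinset, w e)
    (P : α → Prop) (hdc : ∀ a f, P a → ¬ P f → w a < w f) :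
    (x.toFinset.filter P).card ≤ (y.toFinset.filter P).card := by
  by_contra hlt
  push_neg at hlt
  set A : Set α := {e ∈ x | P e} with hA
  set B : Set α := {e ∈ y | P e} with hB
  have hAfin : A.Finite := Set.toFinite _
  have hBfin : B.Finite := Set.toFinite _
  have hAt : A.toFinset = x.toFinset.filter P := by
    ext e; simp [hA]
  have hBt : B.toFinset = y.toFinset.filter P := by
    ext e; simp [hB]
  have hAi : M.Indep A := hx.indep.subset (Set.sep_subset _ _)
  have hBi : M.Indep B := hy.indep.subset (Set.sep_subset _ _)
  have hcard : B.encard < A.encard := by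
    rw [Set.encard_eq_coe_toFinset_card, Set.encard_eq_coe_toFinset_card, hAt, hBt]
    exact_mod_cast hlt
  obtain ⟨a, haAB, hins⟩ := hBi.augment hAi hcard
  have haA : a ∈ A := haAB.1
  have haB : a ∉ B := haAB.2
  have hPa : P a := haA.2
  have hay : a ∉ y := fun h => haB ⟨h, hPa⟩
  obtain ⟨b, hb, hsub1, hsub2⟩ := Matroid.Indep.exists_isBase_subset_union_isBase hins hy
  have hBy : B ⊆ y := Set.sep_subset _ _
  have hsub2' : b ⊆ insert a y := by
    refine hsub2.trans ?_
    rw [Set.insert_union]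
    exact Set.insert_subset_insert (Set.union_subset hBy subset_rfl)
  have hab : a ∈ b := hsub1 (Set.mem_insert _ _)
  have hcard_eq : b.encard = y.encard := hb.encard_eq_encard_of_isBase hy
  have hyfin : y.Finite := Set.toFinite _
  have hnys : ¬ y ⊆ b := by
    intro h
    have hba : b = insert a y :=
      (hsub2').antisymm (Set.insert_subset hab h)
    rw [hba, Set.encard_insert_of_notMem hay] at hcard_eq
    lift y.encard to ℕ using hyfin.encard_lt_top.ne with n hn
    have : n + 1 = n := by exact_mod_cast hcard_eq
    omega
  obtain ⟨f, hfy, hfb⟩ := Set.not_subset.mp hnys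
  have hfB : f ∉ B := fun h => hfb (hsub1 (Set.mem_insert_of_mem _ h))
  have hPf : ¬ P f := fun h => hfB ⟨hfy, h⟩
  have hwa : w a < w f := hdc a f hPa hPf
  have haf : a ≠ f := fun h => hay (h ▸ hfy)
  have hbsub : b ⊆ insert a (y \ {f}) := by
    intro e he
    rcases hsub2' he with h | h
    · exact Or.inl h
    · refine Or.inr ⟨h, fun hef => hfb ?_⟩
      rw [Set.mem_singleton_iff] at hef
      rwa [hef] at he
  have hcard2 : (insert a (y \ {f})).encard = y.encard := by
    rw [Set.encard_insert_of_notMem (fun h => hay h.1)]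
    exact Set.encard_diff_singleton_add_one hfy
  have hbeq : b = insert a (y \ {f}) := by
    refine Set.Finite.eq_of_subset_of_encard_le (Set.toFinite _) hbsub ?_
    rw [hcard2, hcard_eq]
  have htfin : b.toFinset = insert a (y.toFinset.erase f) := by
    ext e
    simp only [Set.mem_toFinset, hbeq, Set.mem_insert_iff, Set.mem_diff,
      Set.mem_singleton_iff, Finset.mem_insert, Finset.mem_erase]
    tauto
  have hsumb : (∑ e ∈ b.toFinset, w e) = w a + ((∑ e ∈ y.toFinset, w e) - w f) := by
    rw [htfin, Finset.sum_insert (by simp [hay]), ← Finset.add_sum_erase y.toFinset w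
      (by simpa using hfy)]
    ring
  have := hymin b hb
  rw [hsumb] at this
  linarith

end aux

/-- if at trade-off `λ₀ ∈ (0,1)` any two elements with distinct weight
vectors have distinct scalarized weights, then all bases minimizing the scalarized weight
`w^{(λ₀)} = (1−λ₀)w₁ + λ₀w₂` share the same image `(w₁(·), w₂(·))`. -/
theorem scalarized_optima_share_image
    {α : Type*} [Fintype α] (M : Matroid α) (w₁ w₂ : α → ℝ)
    (lam : ℝ) (hlam : lam ∈ Set.Ioo (0:ℝ) 1)
    (hsep : ∀ i j : α, (w₁ i, w₂ i) ≠ (w₁ j, w₂ j) →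
      (1 - lam) * w₁ i + lam * w₂ i ≠ (1 - lam) * w₁ j + lam * w₂ j)
    (x y : Set α) (hx : M.IsBase x) (hy : M.IsBase y)
    (hxmin : ∀ b : Set α, M.IsBase b →
      (∑ᶠ e ∈ x, ((1 - lam) * w₁ e + lam * w₂ e)) ≤ ∑ᶠ e ∈ b, ((1 - lam) * w₁ e + lam * w₂ e))
    (hymin : ∀ b : Set α, M.IsBase b →
      (∑ᶠ e ∈ y, ((1 - lam) * w₁ e + lam * w₂ e)) ≤ ∑ᶠ e ∈ b, ((1 - lam) * w₁ e + lam * w₂ e)) :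
    (∑ᶠ e ∈ x, w₁ e) = (∑ᶠ e ∈ y, w₁ e) ∧ (∑ᶠ e ∈ x, w₂ e) = (∑ᶠ e ∈ y, w₂ e) := by
  classical
  set w : α → ℝ := fun e => (1 - lam) * w₁ e + lam * w₂ e with hw
  have hxmin' : ∀ b : Set α, M.IsBase b → (∑ e ∈ x.toFinset, w e) ≤ ∑ e ∈ b.toFinset, w e := by
    intro b hb
    have := hxmin b hb
    rwa [finsum_eq_toFinset_sum, finsum_eq_toFinset_sum] at this
  have hymin' : ∀ b : Set α, M.IsBase b → (∑ e ∈ y.toFinset, w e) ≤ ∑ e ∈ b.toFinset, w e := by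
    intro b hb
    have := hymin b hb
    rwa [finsum_eq_toFinset_sum, finsum_eq_toFinset_sum] at this
  -- fibers of `w` have equal cardinality in `x` and in `y`
  have hcount : ∀ v : ℝ, (x.toFinset.filter (fun e => w e = v)).card
      = (y.toFinset.filter (fun e => w e = v)).card := by
    intro v
    have hle : ∀ t : ℝ, (x.toFinset.filter (fun e => w e ≤ t)).card
        = (y.toFinset.filter (fun e => w e ≤ t)).card := fun t =>
      le_antisymm
        (count_le M w hx hy hymin' _ (fun a f ha hf => lt_of_le_of_lt ha (lt_of_not_ge hf)))
        (count_le M w hy hx hxmin' _ (fun a f ha hf => lt_of_le_of_lt ha (lt_of_not_ge hf)))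
    have hlt : ∀ t : ℝ, (x.toFinset.filter (fun e => w e < t)).card
        = (y.toFinset.filter (fun e => w e < t)).card := fun t =>
      le_antisymm
        (count_le M w hx hy hymin' _ (fun a f ha hf => lt_of_lt_of_le ha (le_of_not_gt hf)))
        (count_le M w hy hx hxmin' _ (fun a f ha hf => lt_of_lt_of_le ha (le_of_not_gt hf)))
    have key : ∀ s : Set α, (s.toFinset.filter (fun e => w e = v)).card
        = (s.toFinset.filter (fun e => w e ≤ v)).card
          - (s.toFinset.filter (fun e => w e < v)).card := by
      intro s
      have hsub : s.toFinset.filter (fun e => w e < v) ⊆ s.toFinset.filter (fun e => w e ≤ v) := by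
        intro e he
        rw [Finset.mem_filter] at he ⊢
        exact ⟨he.1, le_of_lt he.2⟩
      rw [← Finset.card_sdiff_of_subset hsub]
      congr 1
      ext e
      simp only [Finset.mem_sdiff, Finset.mem_filter]
      constructor
      · rintro ⟨he, hv⟩; exact ⟨⟨he, le_of_eq hv⟩, fun h => absurd hv h.2.ne⟩
      · rintro ⟨⟨he, hv⟩, h⟩
        refine ⟨he, le_antisymm hv ?_⟩
        by_contra hlt'
        exact h ⟨he, lt_of_not_ge hlt'⟩
    rw [key, key, hle, hlt]
  -- `w e` determines `(w₁ e, w₂ e)`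
  have hdet : ∀ i j : α, w i = w j → w₁ i = w₁ j ∧ w₂ i = w₂ j := by
    intro i j hij
    by_contra h
    exact hsep i j (fun hp => h (by simpa [Prod.ext_iff] using hp)) hij
  -- generic sum transfer
  have hsum : ∀ k : α → ℝ, (∀ i j : α, w i = w j → k i = k j) →
      (∑ e ∈ x.toFinset, k e) = ∑ e ∈ y.toFinset, k e := by
    intro k hk
    set g : ℝ → ℝ := fun v => if h : ∃ e, w e = v then k h.choose else 0 with hg
    have hgk : ∀ e : α, k e = g (w e) := by
      intro e
      have hex : ∃ e', w e' = w e := ⟨e, rfl⟩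
      rw [hg]
      simp only [hex, dif_pos]
      exact hk e hex.choose hex.choose_spec.symm
    have hrw : ∀ s : Set α, (∑ e ∈ s.toFinset, k e)
        = ∑ v ∈ Finset.image w Finset.univ,
            ((s.toFinset.filter (fun e => w e = v)).card : ℝ) * g v := by
      intro s
      rw [← Finset.sum_fiberwise_of_maps_to (fun e _ => Finset.mem_image_of_mem w
        (Finset.mem_univ e)) k]
      refine Finset.sum_congr rfl fun v _ => ?_
      rw [Finset.sum_congr rfl (fun e he => by
        rw [hgk e, (Finset.mem_filter.mp he).2]), Finset.sum_const, nsmul_eq_mul]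
    rw [hrw, hrw]
    exact Finset.sum_congr rfl fun v _ => by rw [hcount v]
  constructor
  · rw [finsum_eq_toFinset_sum, finsum_eq_toFinset_sum]
    exact hsum w₁ (fun i j h => (hdet i j h).1)
  · rw [finsum_eq_toFinset_sum, finsum_eq_toFinset_sum]
    exact hsum w₂ (fun i j h => (hdet i j h).2)
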